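/- Let A be an NFA with finite state set Q and finite alphabet Σ, and let Split(A) be the PFA on Q whose alphabet consists of all partial maps x : Q → Q ∪ {⊥} such that there exists y ∈ Σ with x(q) ∈ δ(q,y) whenever x(q) ≠ ⊥. Then A is D3-directing if and only if Split(A) carefully synchronizes its full state set Q, and in that case the shortest D3-directing word of A has the same length as the shortest word carefully synchronizing Q in Split(A), i.e., d₃(A) = d₃(Split(A)). -/
import Mathlib


/-- Action of an NFA transition function on a subset of states along a word. -/
def nfaRun {n m : ℕ} (δ : Fin n → Fin m → Finset (Fin n)) :
    Finset (Fin n) → List (Fin m) → Finset (Fin n)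
  | S, [] => S
  | S, a :: w => nfaRun δ (S.biUnion fun q => δ q a) w

/-- The word `w` is D3-directing for the NFA `δ`:
the intersection `⋂_{q ∈ Q} q·w` is nonempty. -/
def nfaD3word {n m : ℕ} (δ : Fin n → Fin m → Finset (Fin n)) (w : List (Fin m)) : Prop :=
  ∃ r : Fin n, ∀ q : Fin n, r ∈ nfaRun δ {q} w

/-- Action on subsets of a word whose letters are partial maps `Fin n → Option (Fin n)`
(the symbols of a PFA): one step maps `S` to `{x q : q ∈ S}` if `x q` is defined for
all `q ∈ S`, and to `∅` otherwise. -/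
def pfaRunF {n : ℕ} :
    Finset (Fin n) → List (Fin n → Option (Fin n)) → Finset (Fin n)
  | S, [] => S
  | S, x :: w =>
      pfaRunF (if ∀ q ∈ S, (x q).isSome then S.image (fun q => (x q).getD q) else ∅) w

/-- `x` is a symbol of `Split(A)`: a partial map lying below some symbol `y` of `A`. -/
def splitSym {n m : ℕ} (δ : Fin n → Fin m → Finset (Fin n))
    (x : Fin n → Option (Fin n)) : Prop :=
  ∃ y : Fin m, ∀ q v, x q = some v → v ∈ δ q y

lemma nfaRun_mono {n m : ℕ} (δ : Fin n → Fin m → Finset (Fin n)) :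
    ∀ (w : List (Fin m)) (S T : Finset (Fin n)), S ⊆ T → nfaRun δ S w ⊆ nfaRun δ T w
  | [], S, T, h => h
  | a :: w, S, T, h => by
      simp only [nfaRun]
      exact nfaRun_mono δ w _ _ (Finset.biUnion_subset_biUnion_of_subset_left _ h)

lemma nfaRun_mem_iff {n m : ℕ} (δ : Fin n → Fin m → Finset (Fin n)) :
    ∀ (w : List (Fin m)) (S : Finset (Fin n)) (r : Fin n),
      r ∈ nfaRun δ S w ↔ ∃ q ∈ S, r ∈ nfaRun δ {q} w
  | [], S, r => by simp [nfaRun, eq_comm]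
  | a :: w, S, r => by
      simp only [nfaRun, Finset.singleton_biUnion]
      rw [nfaRun_mem_iff δ w]
      constructor
      · rintro ⟨p, hp, hr⟩
        rw [Finset.mem_biUnion] at hp
        obtain ⟨q, hq, hpq⟩ := hp
        exact ⟨q, hq, (nfaRun_mem_iff δ w _ r).2 ⟨p, hpq, hr⟩⟩
      · rintro ⟨q, hq, hr⟩
        obtain ⟨p, hp, hr⟩ := (nfaRun_mem_iff δ w _ r).1 hr
        exact ⟨p, Finset.mem_biUnion.2 ⟨q, hq, hp⟩, hr⟩

lemma pfaRunF_empty {n : ℕ} : ∀ (w : List (Fin n → Option (Fin n))),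
    pfaRunF (∅ : Finset (Fin n)) w = ∅
  | [] => rfl
  | x :: w => by simp only [pfaRunF]; simpa using pfaRunF_empty w

lemma pfaRunF_sub {n : ℕ} : ∀ (w : List (Fin n → Option (Fin n))) (S T : Finset (Fin n)),
    T ⊆ S → T.Nonempty → (pfaRunF S w).Nonempty →
    (pfaRunF T w).Nonempty ∧ pfaRunF T w ⊆ pfaRunF S w
  | [], S, T, hTS, hT, _ => ⟨hT, hTS⟩
  | x :: w, S, T, hTS, hT, hS => by
      simp only [pfaRunF] at hS ⊢
      have condS : ∀ q ∈ S, (x q).isSome := by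
        by_contra h
        rw [if_neg h, pfaRunF_empty] at hS
        exact absurd hS (by simp)
      have condT : ∀ q ∈ T, (x q).isSome := fun q hq => condS q (hTS hq)
      rw [if_pos condS] at hS
      rw [if_pos condS, if_pos condT]
      exact pfaRunF_sub w _ _ (Finset.image_subset_image hTS) (hT.image _) hS

lemma nfa_to_pfa {n m : ℕ} (δ : Fin n → Fin m → Finset (Fin n)) :
    ∀ (w : List (Fin m)) (S : Finset (Fin n)) (r : Fin n), S.Nonempty →
    (∀ q ∈ S, r ∈ nfaRun δ {q} w) →
    ∃ w' : List (Fin n → Option (Fin n)), w'.length = w.length ∧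
      (∀ x ∈ w', splitSym δ x) ∧ pfaRunF S w' = {r}
  | [], S, r, hS, h => by
      refine ⟨[], rfl, by simp, ?_⟩
      have : S = {r} := by
        apply Finset.eq_singleton_iff_nonempty_unique_mem.2 ⟨hS, ?_⟩
        intro q hq
        have h2 := h q hq
        simp only [nfaRun, Finset.mem_singleton] at h2
        exact h2.symm
      simpa [pfaRunF] using this
  | a :: w, S, r, hS, h => by
      have hstep : ∀ q ∈ S, ∃ p, p ∈ δ q a ∧ r ∈ nfaRun δ {p} w := by
        intro q hq
        have := h q hq
        simp only [nfaRun, Finset.singleton_biUnion] at this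
        obtain ⟨p, hp, hr⟩ := (nfaRun_mem_iff δ w _ r).1 this
        exact ⟨p, hp, hr⟩
      classical
      set x : Fin n → Option (Fin n) := fun q =>
        if hq : q ∈ S then some (Classical.choose (hstep q hq)) else none with hx
      have hxspec : ∀ q (hq : q ∈ S),
          Classical.choose (hstep q hq) ∈ δ q a ∧
          r ∈ nfaRun δ {Classical.choose (hstep q hq)} w :=
        fun q hq => Classical.choose_spec (hstep q hq)
      have cond : ∀ q ∈ S, (x q).isSome := by
        intro q hq; simp [hx, hq]
      set S' := S.image (fun q => (x q).getD q) with hS'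
      have hS'mem : ∀ p ∈ S', r ∈ nfaRun δ {p} w := by
        intro p hp
        rw [hS', Finset.mem_image] at hp
        obtain ⟨q, hq, hpq⟩ := hp
        have : (x q).getD q = Classical.choose (hstep q hq) := by simp [hx, hq]
        rw [← hpq, this]
        exact (hxspec q hq).2
      obtain ⟨w', hlen, hsym, hrun⟩ := nfa_to_pfa δ w S' r (hS.image _) hS'mem
      refine ⟨x :: w', by simp [hlen], ?_, ?_⟩
      · intro z hz
        rcases List.mem_cons.1 hz with rfl | hz
        · refine ⟨a, fun q v hv => ?_⟩
          simp only [hx] at hv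
          by_cases hq : q ∈ S
          · rw [dif_pos hq] at hv
            obtain rfl : v = Classical.choose (hstep q hq) := by
              simpa using hv.symm
            exact (hxspec q hq).1
          · rw [dif_neg hq] at hv
            exact absurd hv (by simp)
        · exact hsym z hz
      · simp only [pfaRunF, if_pos cond]
        exact hrun

lemma pfa_to_nfa {n m : ℕ} (δ : Fin n → Fin m → Finset (Fin n)) :
    ∀ (w' : List (Fin n → Option (Fin n))), (∀ x ∈ w', splitSym δ x) →
    ∃ w : List (Fin m), w.length = w'.length ∧
      ∀ S : Finset (Fin n), pfaRunF S w' ⊆ nfaRun δ S w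
  | [], _ => ⟨[], rfl, fun S => by simp [pfaRunF, nfaRun]⟩
  | x :: w', hsym => by
      obtain ⟨y, hy⟩ := hsym x (by simp)
      obtain ⟨w, hlen, hsub⟩ := pfa_to_nfa δ w' (fun z hz => hsym z (by simp [hz]))
      refine ⟨y :: w, by simp [hlen], fun S => ?_⟩
      simp only [pfaRunF, nfaRun]
      refine (hsub _).trans (nfaRun_mono δ w _ _ ?_)
      split_ifs with cond
      · intro p hp
        rw [Finset.mem_image] at hp
        obtain ⟨q, hq, hpq⟩ := hp
        have hs := cond q hq
        obtain ⟨v, hv⟩ := Option.isSome_iff_exists.1 hs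
        rw [Finset.mem_biUnion]
        refine ⟨q, hq, ?_⟩
        rw [← hpq, hv]
        simpa using hy q v hv
      · simp

lemma key {n m : ℕ} (δ : Fin n → Fin m → Finset (Fin n)) (l : ℕ) :
    (∃ w, w.length = l ∧ nfaD3word δ w) ↔
    (∃ w' : List (Fin n → Option (Fin n)), w'.length = l ∧
      (∀ x ∈ w', splitSym δ x) ∧ (pfaRunF Finset.univ w').card = 1) := by
  constructor
  · rintro ⟨w, rfl, r, hr⟩
    obtain ⟨w', hlen, hsym, hrun⟩ := nfa_to_pfa δ w Finset.univ r ⟨r, Finset.mem_univ r⟩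
      (fun q _ => hr q)
    exact ⟨w', hlen, hsym, by rw [hrun]; simp⟩
  · rintro ⟨w', rfl, hsym, hcard⟩
    obtain ⟨r, hr⟩ := Finset.card_eq_one.1 hcard
    obtain ⟨w, hlen, hsub⟩ := pfa_to_nfa δ w' hsym
    refine ⟨w, hlen, r, fun q => ?_⟩
    obtain ⟨⟨p, hp⟩, hsub2⟩ :=
      pfaRunF_sub w' Finset.univ {q} (Finset.subset_univ _) ⟨q, Finset.mem_singleton_self q⟩ (by rw [hr]; simp)
    have hpr : p = r := by have := hsub2 hp; rw [hr] at this; simpa using this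
    exact hsub {q} (hpr ▸ hp)

theorem stmt15 (n m : ℕ) (δ : Fin n → Fin m → Finset (Fin n)) :
    -- A is D3-directing iff Split(A) carefully synchronizes its full state set
    ((∃ w, nfaD3word δ w) ↔
      (∃ w : List (Fin n → Option (Fin n)), (∀ x ∈ w, splitSym δ x) ∧
        (pfaRunF Finset.univ w).card = 1)) ∧
    -- and in that case d₃(A) = d₃(Split(A))
    ((∃ w, nfaD3word δ w) →
      sInf {l : ℕ | ∃ w, w.length = l ∧ nfaD3word δ w} =
        sInf {l : ℕ | ∃ w : List (Fin n → Option (Fin n)), w.length = l ∧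
          (∀ x ∈ w, splitSym δ x) ∧ (pfaRunF Finset.univ w).card = 1}) := by
  have hsets : {l : ℕ | ∃ w, w.length = l ∧ nfaD3word δ w} =
      {l : ℕ | ∃ w : List (Fin n → Option (Fin n)), w.length = l ∧
        (∀ x ∈ w, splitSym δ x) ∧ (pfaRunF Finset.univ w).card = 1} := by
    ext l; exact key δ l
  constructor
  · constructor
    · rintro ⟨w, hw⟩
      obtain ⟨w', _, hsym, hcard⟩ := (key δ w.length).1 ⟨w, rfl, hw⟩
      exact ⟨w', hsym, hcard⟩
    · rintro ⟨w', hsym, hcard⟩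
      obtain ⟨w, _, hw⟩ := (key δ w'.length).2 ⟨w', rfl, hsym, hcard⟩
      exact ⟨w, hw⟩
  · intro _
    rw [hsets]
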